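/- Let n > d > 0 be integers, y ∈ ℝ^n nonzero, P a symmetric projection of rank d, ρ = ‖y − Py‖²/‖y‖² with 0 < ρ < 1 and 1 − ρ > d/n. Define f(α) = (n/2)·log(ρ + α) − (d/2)·log α − ((n−d)/2)·log(1+α) for α > 0. Then f attains its minimum at α_m = ρd/((1−ρ)n − d), and f(α_m) = −(n/2)·KL(d/n ‖ 1−ρ), where KL(p‖q) = p·log(p/q) + (1−p)·log((1−p)/(1−q)). -/

import Mathlib

open Real Matrix

theorem lorp_projective_min (n d : ℕ) (hd : 0 < d) (hdn : d < n)
    (y : Fin n → ℝ) (hy : y ≠ 0)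
    (P : Matrix (Fin n) (Fin n) ℝ) (hsym : P.IsSymm) (hproj : P * P = P)
    (htr : P.trace = (d : ℝ))
    (ρ : ℝ) (hρ : ρ = ((y - P.mulVec y) ⬝ᵥ (y - P.mulVec y)) / (y ⬝ᵥ y))
    (hρ0 : 0 < ρ) (hρ1 : ρ < 1) (hcond : (d : ℝ) / n < 1 - ρ)
    (f : ℝ → ℝ)
    (hf : f = fun α => (n : ℝ) / 2 * log (ρ + α) - (d : ℝ) / 2 * log α
        - ((n : ℝ) - d) / 2 * log (1 + α))
    (αm : ℝ) (hαm : αm = ρ * d / ((1 - ρ) * n - d)) :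
    IsMinOn f (Set.Ioi 0) αm ∧
      f αm = -((n : ℝ) / 2) *
        ((d : ℝ) / n * log (((d : ℝ) / n) / (1 - ρ))
          + (1 - (d : ℝ) / n) * log ((1 - (d : ℝ) / n) / (1 - (1 - ρ)))) := by
  have hn0 : (0:ℝ) < (n:ℝ) := by exact_mod_cast hd.trans hdn
  have hd0 : (0:ℝ) < (d:ℝ) := by exact_mod_cast hd
  have hdn' : (d:ℝ) < (n:ℝ) := by exact_mod_cast hdn
  have hnd0 : (0:ℝ) < (n:ℝ) - d := by linarith
  have h1ρ : (0:ℝ) < 1 - ρ := by linarith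
  have hs : (0:ℝ) < (1 - ρ) * n - d := by
    have := (div_lt_iff₀ hn0).mp hcond
    linarith
  have hαm0 : 0 < αm := by rw [hαm]; positivity
  have e1 : ρ + αm = ρ * (1 - ρ) * n / ((1 - ρ) * n - d) := by
    rw [hαm]; field_simp; ring
  have e2 : (1:ℝ) + αm = (1 - ρ) * ((n:ℝ) - d) / ((1 - ρ) * n - d) := by
    rw [hαm]; field_simp; ring
  have l1 : log (ρ + αm) = log ρ + log (1 - ρ) + log (n:ℝ) - log ((1 - ρ) * n - d) := by
    rw [e1, log_div (by positivity) (by positivity),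
      log_mul (by positivity) (by positivity), log_mul (by positivity) (by positivity)]
  have l2 : log αm = log ρ + log (d:ℝ) - log ((1 - ρ) * n - d) := by
    rw [hαm, log_div (by positivity) (by positivity), log_mul (by positivity) (by positivity)]
  have l3 : log (1 + αm) = log (1 - ρ) + log ((n:ℝ) - d) - log ((1 - ρ) * n - d) := by
    rw [e2, log_div (by positivity) (by positivity), log_mul (by positivity) (by positivity)]
  have eval : f αm = (n:ℝ)/2 * (log ρ + log (1-ρ) + log (n:ℝ))
      - (d:ℝ)/2 * (log ρ + log (d:ℝ)) - ((n:ℝ)-d)/2 * (log (1-ρ) + log ((n:ℝ)-d)) := by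
    rw [hf]; simp only []; rw [l1, l2, l3]; ring
  have r1 : log (((d:ℝ) / n) / (1 - ρ)) = log (d:ℝ) - log (n:ℝ) - log (1 - ρ) := by
    rw [log_div (by positivity) (by positivity), log_div (by positivity) (by positivity)]
  have r2 : (1:ℝ) - (d:ℝ)/n = ((n:ℝ) - d)/n := by field_simp
  have r3 : log ((1 - (d:ℝ)/n) / (1 - (1 - ρ)))
      = log ((n:ℝ) - d) - log (n:ℝ) - log ρ := by
    have : (1:ℝ) - (1 - ρ) = ρ := by ring
    rw [r2, this, log_div (by positivity) (by positivity),
      log_div (by positivity) (by positivity)]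
  refine ⟨?_, ?_⟩
  · rw [isMinOn_iff]
    intro α hα
    have hα0 : 0 < α := hα
    set a : ℝ := α * (1 - ρ) * n / d with ha_def
    set b : ℝ := (1 + α) * ρ * n / ((n:ℝ) - d) with hb_def
    have ha : 0 < a := by positivity
    have hb : 0 < b := by positivity
    have hw : (d:ℝ)/n + ((n:ℝ)-d)/n = 1 := by field_simp; ring
    have young := Real.geom_mean_le_arith_mean2_weighted
      (by positivity : (0:ℝ) ≤ (d:ℝ)/n) (by positivity : (0:ℝ) ≤ ((n:ℝ)-d)/n)
      ha.le hb.le hw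
    have hsum : (d:ℝ)/n * a + ((n:ℝ)-d)/n * b = ρ + α := by
      rw [ha_def, hb_def]; field_simp; ring
    have hlog : (d:ℝ)/n * log a + ((n:ℝ)-d)/n * log b ≤ log (ρ + α) := by
      have h1 : log (a ^ ((d:ℝ)/n) * b ^ (((n:ℝ)-d)/n))
          = (d:ℝ)/n * log a + ((n:ℝ)-d)/n * log b := by
        rw [log_mul (by positivity) (by positivity), log_rpow ha, log_rpow hb]
      rw [← h1]
      apply Real.log_le_log (by positivity)
      rw [← hsum]
      exact young
    have key : (d:ℝ) * log a + ((n:ℝ)-d) * log b ≤ (n:ℝ) * log (ρ + α) := by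
      have h2 := mul_le_mul_of_nonneg_left hlog hn0.le
      have h3 : (n:ℝ) * ((d:ℝ)/n * log a + ((n:ℝ)-d)/n * log b)
          = (d:ℝ) * log a + ((n:ℝ)-d) * log b := by field_simp
      linarith
    have la : log a = log α + log (1 - ρ) + log (n:ℝ) - log (d:ℝ) := by
      rw [ha_def, log_div (by positivity) (by positivity),
        log_mul (by positivity) (by positivity), log_mul (by positivity) (by positivity)]
    have lb : log b = log (1 + α) + log ρ + log (n:ℝ) - log ((n:ℝ)-d) := by
      rw [hb_def, log_div (by positivity) (by positivity),
        log_mul (by positivity) (by positivity), log_mul (by positivity) (by positivity)]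
    rw [eval, hf]
    simp only []
    rw [la, lb] at key
    linarith
  · rw [eval, r1, r3, r2]
    field_simp
    ring
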